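/- Assume there is no element i ∈ k with i² = −1. Let A ∈ O(n,k,β) satisfy A² = −I_n. Then n is even and there exists U ∈ GL(n,k) such that A = U·J·U⁻¹, where J is the n×n block matrix [[0, −I_{n/2}],[I_{n/2}, 0]], and Uᵀ·M·U is the block diagonal matrix [[U₁, 0],[0, U₁]] where U₁ is a diagonal (n/2)×(n/2) matrix over k. -/

import Mathlib

open Matrix

open Matrix Module LinearMap

universe u

lemma type3_aux {k : Type u} [Field k] (hchar : (2:k) ≠ 0) (d : ℕ) :
    ∀ {V : Type u} [AddCommGroup V] [Module k V] [FiniteDimensional k V],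
    finrank k V = d → ∀ (B : LinearMap.BilinForm k V), B.IsSymm → B.Nondegenerate →
    ∀ (φ : V →ₗ[k] V), (∀ x y, B (φ x) (φ y) = B x y) → (∀ x, φ (φ x) = -x) →
    ∃ m, d = m + m ∧ ∃ f : Fin m → V,
      (∀ i, B (f i) (f i) ≠ 0) ∧
      (∀ i j, i ≠ j → B (f i) (f j) = 0) ∧
      (∀ i j, B (f i) (φ (f j)) = 0) := by
  induction d using Nat.strong_induction_on with
  | _ d IH =>
  intro V _ _ _ hd B hsymm hnd φ hφB hφ2
  rcases Nat.eq_zero_or_pos d with hd0 | hdpos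
  · exact ⟨0, by omega, finZeroElim, fun i => i.elim0, fun i => i.elim0, fun i => i.elim0⟩
  have hrefl : B.IsRefl := hsymm.isRefl
  have : Nontrivial V := by
    rw [← Module.finrank_pos_iff (R := k)]; omega
  have hBne : B ≠ 0 := hnd.ne_zero
  have : Invertible (2 : k) := invertibleOfNonzero hchar
  obtain ⟨v, hv⟩ := LinearMap.BilinForm.exists_bilinForm_self_ne_zero hBne
    (LinearMap.BilinForm.isSymm_iff.1 hsymm)
  -- basic facts
  have hvφ : B v (φ v) = 0 := by
    have h1 := hφB v (φ v)
    rw [hφ2, map_neg] at h1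
    have h2 := hsymm.eq (φ v) v
    have : B v (φ v) + B v (φ v) = 0 := by
      nth_rewrite 1 [← h1]; rw [h2]; ring
    have := mul_eq_zero.mp (by rw [two_mul]; exact this : (2:k) * B v (φ v) = 0)
    tauto
  have hφvv : B (φ v) v = 0 := by rw [← hsymm.eq]; exact hvφ
  have hφvφv : B (φ v) (φ v) = B v v := hφB v v
  set S : Submodule k V := Submodule.span k {v, φ v} with hS
  have hvS : v ∈ S := Submodule.subset_span (by simp)
  have hφvS : φ v ∈ S := Submodule.subset_span (by simp)
  -- restriction to S nondegenerate
  have hSnd : (B.restrict S).Nondegenerate := by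
    refine (LinearMap.IsRefl.nondegenerate_iff_separatingLeft
      (B := B.restrict S) (hsymm.restrict S).isRefl).2 ?_
    rintro ⟨x, hx⟩ hbot
    obtain ⟨a, b, hab⟩ := Submodule.mem_span_pair.mp hx
    have h1 : B x v = 0 := hbot ⟨v, hvS⟩
    have h2 : B x (φ v) = 0 := hbot ⟨φ v, hφvS⟩
    rw [← hab] at h1 h2
    simp only [map_add, _root_.map_smul, LinearMap.add_apply, LinearMap.smul_apply,
      smul_eq_mul] at h1 h2
    simp only [hφvv, hvφ, hφvφv, mul_zero, add_zero, zero_add] at h1 h2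
    have ha : a = 0 := by
      have h1' : a * B v v = 0 := by linear_combination h1
      rcases mul_eq_zero.mp h1' with h | h
      exacts [h, absurd h hv]
    have hb : b = 0 := by
      have h2' : b * B v v = 0 := by linear_combination h2
      rcases mul_eq_zero.mp h2' with h | h
      exacts [h, absurd h hv]
    ext; simp [← hab, ha, hb]
  set W : Submodule k V := B.orthogonal S with hW
  have hcompl : IsCompl S W :=
    LinearMap.BilinForm.isCompl_orthogonal_of_restrict_nondegenerate hrefl hSnd
  have horthorth : B.orthogonal W = S :=
    LinearMap.BilinForm.orthogonal_orthogonal hnd hrefl S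
  have hWnd : (B.restrict W).Nondegenerate := by
    apply B.nondegenerate_restrict_of_disjoint_orthogonal hrefl
    rw [hW, horthorth]
    exact hcompl.disjoint.symm
  have hindep : LinearIndependent k ![v, φ v] := by
    apply LinearMap.BilinForm.linearIndependent_of_iIsOrtho (B := B)
    · rw [LinearMap.BilinForm.iIsOrtho_def]
      intro i j hij
      fin_cases i <;> fin_cases j <;>
        first
          | exact absurd rfl hij
          | simp [LinearMap.isOrtho_def, hvφ, hφvv]
    · intro i
      fin_cases i <;>
        simp [LinearMap.isOrtho_def, LinearMap.BilinForm.isOrtho_def, hφvφv, hv]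
  have hSrank : finrank k S = 2 := by
    have hset : ({v, φ v} : Set V) = Set.range ![v, φ v] := by
      simp [Matrix.range_cons, Matrix.range_empty]
      exact Set.pair_comm v (φ v)
    rw [hS, hset, finrank_span_eq_card hindep]
    simp
  have hWrank : finrank k W + 2 = d := by
    rw [← hSrank, ← hd, add_comm]
    exact Submodule.finrank_add_eq_of_isCompl hcompl
  have hWinv : ∀ x ∈ W, φ x ∈ W := by
    intro x hx
    rw [hW, LinearMap.BilinForm.mem_orthogonal_iff]
    intro s hs
    obtain ⟨a, b, rfl⟩ := Submodule.mem_span_pair.mp hs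
    have hts : (b • v - a • φ v) ∈ S :=
      Submodule.sub_mem _ (Submodule.smul_mem _ _ hvS) (Submodule.smul_mem _ _ hφvS)
    have hφt : φ (b • v - a • φ v) = a • v + b • φ v := by
      simp only [map_sub, _root_.map_smul, hφ2, smul_neg, sub_neg_eq_add]
      abel
    show (B (a • v + b • φ v)) (φ x) = 0
    rw [← hφt, hφB]
    exact hx _ hts
  let φW : W →ₗ[k] W := φ.restrict hWinv
  have hφWB : ∀ x y : W, (B.restrict W) (φW x) (φW y) = (B.restrict W) x y := by
    intro x y
    simp only [LinearMap.BilinForm.restrict_apply, φW, LinearMap.restrict_coe_apply]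
    exact hφB x y
  have hφW2 : ∀ x : W, φW (φW x) = -x := by
    intro x
    ext
    simp [φW, LinearMap.restrict_coe_apply, hφ2]
  obtain ⟨m', hm', f', hf1, hf2, hf3⟩ :=
    IH (finrank k W) (by omega) rfl (B.restrict W) (hsymm.restrict W) hWnd φW hφWB hφW2
  simp only [LinearMap.BilinForm.restrict_apply] at hf1 hf2 hf3
  have horthS : ∀ (i : Fin m') (s : V), s ∈ S → B s (f' i) = 0 := fun i s hs =>
    LinearMap.BilinForm.mem_orthogonal_iff.mp (f' i).2 s hs
  have horthSφ : ∀ (i : Fin m') (s : V), s ∈ S → B s (φ (f' i)) = 0 := fun i s hs =>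
    LinearMap.BilinForm.mem_orthogonal_iff.mp (hWinv _ (f' i).2) s hs
  refine ⟨m' + 1, by omega, Fin.cons v (fun i => (f' i : V)), ?_, ?_, ?_⟩
  · intro i
    induction i using Fin.cases with
    | zero => simpa using hv
    | succ i' => simpa using hf1 i'
  · intro i j hij
    induction i using Fin.cases with
    | zero =>
      induction j using Fin.cases with
      | zero => exact absurd rfl hij
      | succ j' => simpa using horthS j' v hvS
    | succ i' =>
      induction j using Fin.cases with
      | zero =>
        rw [Fin.cons_succ, Fin.cons_zero, ← hsymm.eq]
        exact horthS i' v hvS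
      | succ j' =>
        have : i' ≠ j' := fun h => hij (by rw [h])
        simpa using hf2 i' j' this
  · intro i j
    induction i using Fin.cases with
    | zero =>
      induction j using Fin.cases with
      | zero => simpa using hvφ
      | succ j' => simpa using horthSφ j' v hvS
    | succ i' =>
      induction j using Fin.cases with
      | zero =>
        rw [Fin.cons_succ, Fin.cons_zero, ← hsymm.eq]
        exact horthS i' (φ v) hφvS
      | succ j' =>
        have := hf3 i' j'
        rw [Fin.cons_succ, Fin.cons_succ]
        simpa [φW, LinearMap.restrict_coe_apply] using this

/-- Structure of Type 3 involutions when `√-1 ∉ k`: if `A ∈ O(n,k,β)` with `A² = -I`,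
then `n` is even, `A = U · [[0, -I],[I, 0]] · U⁻¹` with `UᵀMU = [[U₁, 0],[0, U₁]]`,
`U₁` diagonal. -/
theorem type3_structure_i_not_in_k {k : Type*} [Field k]
    (hchar : (2 : k) ≠ 0) {n : ℕ} (hn : 2 < n)
    (M : Matrix (Fin n) (Fin n) k) (hMdiag : M.IsDiag) (hM : IsUnit M)
    (hnoi : ¬ ∃ i : k, i ^ 2 = -1)
    (A : Matrix (Fin n) (Fin n) k) (hAorth : Aᵀ * M * A = M) (hA2 : A * A = -1) :
    ∃ (m : ℕ) (hm : n = m + m) (U : Matrix (Fin n) (Fin n) k), IsUnit U ∧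
      A = U * (Matrix.reindex (finSumFinEquiv.trans (finCongr hm.symm))
          (finSumFinEquiv.trans (finCongr hm.symm))
          (Matrix.fromBlocks 0 (-(1 : Matrix (Fin m) (Fin m) k))
            (1 : Matrix (Fin m) (Fin m) k) 0)) * U⁻¹ ∧
      ∃ U₁ : Matrix (Fin m) (Fin m) k, U₁.IsDiag ∧
        Uᵀ * M * U = Matrix.reindex (finSumFinEquiv.trans (finCongr hm.symm))
          (finSumFinEquiv.trans (finCongr hm.symm)) (Matrix.fromBlocks U₁ 0 0 U₁) := by
  classical
  have hMsymm : Mᵀ = M := hMdiag.isSymm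
  set B : LinearMap.BilinForm k (Fin n → k) := Matrix.toBilin' M with hB
  have hBapp : ∀ x y, B x y = x ⬝ᵥ M *ᵥ y := fun x y => Matrix.toBilin'_apply' M x y
  have hsymm : B.IsSymm := by
    refine ⟨fun x y => ?_⟩
    simp only [RingHom.id_apply, hBapp]
    rw [Matrix.dotProduct_mulVec, ← Matrix.mulVec_transpose, hMsymm, dotProduct_comm]
  have hMdet : IsUnit M.det := (Matrix.isUnit_iff_isUnit_det M).mp hM
  have hnd : B.Nondegenerate := by
    refine (LinearMap.IsRefl.nondegenerate_iff_separatingLeft (B := B) hsymm.isRefl).2 ?_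
    intro x hx
    have hvm : x ᵥ* M = 0 := by
      funext j
      have := hx (Pi.single j 1)
      rw [hBapp, Matrix.dotProduct_mulVec] at this
      simpa using this
    have := congrArg (· ᵥ* M⁻¹) hvm
    simpa [Matrix.vecMul_vecMul, Matrix.mul_nonsing_inv M hMdet] using this
  set φ : (Fin n → k) →ₗ[k] (Fin n → k) := Matrix.mulVecLin A with hφ
  have hφapp : ∀ x, φ x = A *ᵥ x := fun x => rfl
  have hφB : ∀ x y, B (φ x) (φ y) = B x y := by
    intro x y
    simp only [hBapp, hφapp]
    rw [Matrix.mulVec_mulVec, Matrix.dotProduct_mulVec, ← Matrix.vecMul_transpose,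
      Matrix.vecMul_vecMul, ← Matrix.mul_assoc, hAorth, Matrix.dotProduct_mulVec]
  have hφ2 : ∀ x, φ (φ x) = -x := by
    intro x
    simp only [hφapp, Matrix.mulVec_mulVec, hA2]
    simp [Matrix.neg_mulVec]
  obtain ⟨m, hm, f, hf1, hf2, hf3⟩ :=
    type3_aux hchar n (Module.finrank_fin_fun k) B hsymm hnd φ hφB hφ2
  set g : Fin m ⊕ Fin m → (Fin n → k) := Sum.elim f (fun i => φ (f i)) with hg
  have hgd : ∀ p, B (g p) (g p) ≠ 0 := by
    rintro (i | i)
    · exact hf1 i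
    · simpa [hg, hφB] using hf1 i
  have hgo : ∀ p q, p ≠ q → B (g p) (g q) = 0 := by
    rintro (i | i) (j | j) hpq
    · exact hf2 i j (fun h => hpq (by rw [h]))
    · exact hf3 i j
    · rw [← hsymm.eq]; exact hf3 j i
    · simp only [hg, Sum.elim_inr]
      rw [hφB]
      exact hf2 i j (fun h => hpq (by rw [h]))
  have hli : LinearIndependent k g := by
    apply LinearMap.BilinForm.linearIndependent_of_iIsOrtho (B := B)
    · exact fun p q hpq => hgo p q hpq
    · exact fun p h => hgd p h
  have hmpos : 0 < m := by omega
  have : Nonempty (Fin m ⊕ Fin m) := ⟨Sum.inl ⟨0, hmpos⟩⟩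
  have hcard : Fintype.card (Fin m ⊕ Fin m) = Module.finrank k (Fin n → k) := by
    simp [Module.finrank_fin_fun, hm]
  let b : Basis (Fin m ⊕ Fin m) k (Fin n → k) :=
    basisOfLinearIndependentOfCardEqFinrank hli hcard
  have hb : ⇑b = g := coe_basisOfLinearIndependentOfCardEqFinrank hli hcard
  set eqv : Fin m ⊕ Fin m ≃ Fin n := finSumFinEquiv.trans (finCongr hm.symm) with heqv
  set U : Matrix (Fin n) (Fin n) k := (Pi.basisFun k (Fin n)).toMatrix ⇑(b.reindex eqv)
    with hU
  letI : Invertible U := (Pi.basisFun k (Fin n)).invertibleToMatrix (b.reindex eqv)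
  have hUunit : IsUnit U := isUnit_of_invertible U
  have hUentry : ∀ p q, U p q = g (eqv.symm q) p := by
    intro p q
    simp [hU, Basis.toMatrix_apply, Pi.basisFun_repr, Basis.coe_reindex, hb,
      Function.comp]
  refine ⟨m, hm, U, hUunit, ?_, ?_⟩
  · have hAU : A * U = U * (Matrix.reindex eqv eqv
        (Matrix.fromBlocks 0 (-(1 : Matrix (Fin m) (Fin m) k)) 1 0)) := by
      ext p q
      rw [Matrix.mul_apply, Matrix.mul_apply]
      rw [← Equiv.sum_comp eqv (fun r => U p r * _)]
      rcases hq : eqv.symm q with i | i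
      · calc ∑ r, A p r * U r q = (A *ᵥ g (eqv.symm q)) p := by
              simp [Matrix.mulVec, dotProduct, hUentry]
          _ = g (Sum.inr i) p := by rw [hq]; rfl
          _ = ∑ s, U p (eqv s) * (Matrix.reindex eqv eqv
                (Matrix.fromBlocks 0 (-(1 : Matrix (Fin m) (Fin m) k)) 1 0)) (eqv s) q := by
              simp [Matrix.reindex_apply, Matrix.submatrix_apply, hq, hUentry, hg,
                Fintype.sum_sum_type, Matrix.one_apply, mul_ite, Finset.sum_ite_eq']
      · calc ∑ r, A p r * U r q = (A *ᵥ g (eqv.symm q)) p := by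
              simp [Matrix.mulVec, dotProduct, hUentry]
          _ = (-(f i)) p := by
              rw [hq]
              have h1 : A *ᵥ g (Sum.inr i) = -(f i) := by
                simp only [hg, Sum.elim_inr, ← hφapp]
                exact hφ2 (f i)
              exact congrFun h1 p
          _ = ∑ s, U p (eqv s) * (Matrix.reindex eqv eqv
                (Matrix.fromBlocks 0 (-(1 : Matrix (Fin m) (Fin m) k)) 1 0)) (eqv s) q := by
              simp [Matrix.reindex_apply, Matrix.submatrix_apply, hq, hUentry, hg,
                Fintype.sum_sum_type, Matrix.one_apply, mul_ite, Finset.sum_ite_eq']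
    rw [eq_comm]
    exact (Matrix.mul_inv_eq_iff_eq_mul_of_invertible _ _ _).mpr hAU.symm
  · refine ⟨Matrix.diagonal (fun i => B (f i) (f i)), Matrix.isDiag_diagonal _, ?_⟩
    ext p q
    have hlhs : (Uᵀ * M * U) p q = B (g (eqv.symm p)) (g (eqv.symm q)) := by
      rw [Matrix.mul_assoc, Matrix.mul_apply, hBapp]
      simp only [Matrix.transpose_apply, Matrix.mul_apply, dotProduct,
        Matrix.mulVec, hUentry]

    rw [hlhs, Matrix.reindex_apply, Matrix.submatrix_apply]
    rcases hp : eqv.symm p with i | i <;> rcases hq : eqv.symm q with j | j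
    · simp only [hg, Sum.elim_inl, Matrix.fromBlocks_apply₁₁, Matrix.diagonal_apply]
      by_cases h : i = j
      · subst h; simp
      · simp [h, hf2 i j h]
    · simp only [hg, Sum.elim_inl, Sum.elim_inr, Matrix.fromBlocks_apply₁₂,
        Matrix.zero_apply]
      exact hf3 i j
    · simp only [hg, Sum.elim_inl, Sum.elim_inr, Matrix.fromBlocks_apply₂₁,
        Matrix.zero_apply]
      rw [← hsymm.eq]
      exact hf3 j i
    · simp only [hg, Sum.elim_inr, Matrix.fromBlocks_apply₂₂, Matrix.diagonal_apply]
      rw [hφB]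
      by_cases h : i = j
      · subst h; simp
      · simp [h, hf2 i j h]
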